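/- Y° is cut out in the torus by the homogenized equations: Y° = {y ∈ (ℂˣ)ⁿ : f₁ʰ(y) = 1, …, f_kʰ(y) = 1}. -/

import Mathlib

/-!
Statement 1: `Y°` is cut out in the torus by the homogenized equations:
`Y° = {y ∈ (ℂ*)ⁿ : f₁ʰ(y) = 1, …, f_kʰ(y) = 1}`.
-/

noncomputable section

open Finset Matrix

/-- Evaluation of the Laurent monomial `t ^ m` with integer exponent vector `m`. -/
def lmon {d : ℕ} (t : Fin d → ℂ) (m : Fin d → ℤ) : ℂ := ∏ j, t j ^ m j

/-- Evaluation of the Laurent polynomial with support `S` and coefficients `c` at `t`. -/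
def leval {d : ℕ} (S : Finset (Fin d → ℤ)) (c : (Fin d → ℤ) → ℂ) (t : Fin d → ℂ) : ℂ :=
  ∑ m ∈ S, c m * lmon t m

/-- The monomial map `φ_B` whose `j`-th coordinate is `t ^ bⱼ`, `bⱼ` the `j`-th column
of the integer matrix `B`. -/
def monMap {p q : ℕ} (B : Matrix (Fin p) (Fin q) ℤ) (t : Fin p → ℂ) : Fin q → ℂ :=
  fun j => ∏ i, t i ^ B i j

/-- Evaluation at `y ∈ ℂ^{d+k}` of the homogenization
`fʰ(y) = Σ_{m ∈ S} c m ∏ⱼ yⱼ ^ (⟨uⱼ, m⟩ + aⱼ)` of the Laurent polynomial with support `S`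
and coefficients `c`, with respect to the facet normals `u` and offsets `a`. -/
def homogEval {d n : ℕ} (S : Finset (Fin d → ℤ)) (c : (Fin d → ℤ) → ℂ)
    (u : Fin n → Fin d → ℤ) (a : Fin n → ℤ) (y : Fin n → ℂ) : ℂ :=
  ∑ m ∈ S, c m * ∏ j, y j ^ ((∑ l, u j l * m l) + a j).toNat

lemma my_zpow_sum {ι : Type*} {x : ℂ} (hx : x ≠ 0) (s : Finset ι) (f : ι → ℤ) :
    x ^ (∑ i ∈ s, f i) = ∏ i ∈ s, x ^ f i := by
  classical
  induction s using Finset.induction with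
  | empty => simp
  | insert _ _ h ih => rw [Finset.sum_insert h, Finset.prod_insert h, zpow_add₀ hx, ih]

lemma monMap_ne_zero {p q : ℕ} (B : Matrix (Fin p) (Fin q) ℤ) {t : Fin p → ℂ}
    (ht : ∀ i, t i ≠ 0) (j : Fin q) : monMap B t j ≠ 0 :=
  Finset.prod_ne_zero_iff.2 fun i _ => zpow_ne_zero _ (ht i)

lemma monMap_monMap {p q r : ℕ} (A : Matrix (Fin q) (Fin r) ℤ) (B : Matrix (Fin p) (Fin q) ℤ)
    {t : Fin p → ℂ} (ht : ∀ i, t i ≠ 0) :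
    monMap A (monMap B t) = monMap (B * A) t := by
  funext j
  show ∏ i, (∏ l, t l ^ B l i) ^ A i j = ∏ l, t l ^ (B * A) l j
  calc ∏ i, (∏ l, t l ^ B l i) ^ A i j
      = ∏ i, ∏ l, t l ^ (B l i * A i j) := by
        simp_rw [← Finset.prod_zpow, ← _root_.zpow_mul]
    _ = ∏ l, ∏ i, t l ^ (B l i * A i j) := Finset.prod_comm
    _ = ∏ l, t l ^ ((B * A) l j) := by
        refine Finset.prod_congr rfl fun l _ => ?_
        rw [Matrix.mul_apply]
        exact (my_zpow_sum (ht l) _ _).symm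

lemma monMap_one {p : ℕ} (t : Fin p → ℂ) : monMap 1 t = t := by
  funext j
  show ∏ i, t i ^ (1 : Matrix (Fin p) (Fin p) ℤ) i j = t j
  rw [Finset.prod_eq_single j (fun b _ hb => by rw [Matrix.one_apply_ne hb, zpow_zero])
    (by simp), Matrix.one_apply_eq, zpow_one]

lemma homog_eq {d k : ℕ} (S : Finset (Fin d → ℤ)) (c : (Fin d → ℤ) → ℂ)
    (u : Fin (d + k) → Fin d → ℤ) (a : Fin (d + k) → ℤ) {y : Fin (d + k) → ℂ}
    (hy : ∀ j, y j ≠ 0) (ha : ∀ m ∈ S, ∀ j, 0 ≤ (∑ l, u j l * m l) + a j) :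
    homogEval S c u a y
      = leval S c (fun l => ∏ j, y j ^ u j l) * ∏ j, y j ^ a j := by
  rw [leval, homogEval, Finset.sum_mul]
  refine Finset.sum_congr rfl fun m hm => ?_
  rw [mul_assoc]
  congr 1
  calc ∏ j, y j ^ ((∑ l, u j l * m l) + a j).toNat
      = ∏ j, y j ^ ((∑ l, u j l * m l) + a j) := by
        refine Finset.prod_congr rfl fun j _ => ?_
        rw [← zpow_natCast, Int.toNat_of_nonneg (ha m hm j)]
    _ = ∏ j, (y j ^ (∑ l, u j l * m l) * y j ^ a j) :=
        Finset.prod_congr rfl fun j _ => zpow_add₀ (hy j) _ _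
    _ = (∏ j, y j ^ (∑ l, u j l * m l)) * ∏ j, y j ^ a j := Finset.prod_mul_distrib
    _ = lmon (fun l => ∏ j, y j ^ u j l) m * ∏ j, y j ^ a j := by
        congr 1
        rw [lmon]
        calc ∏ j, y j ^ (∑ l, u j l * m l)
            = ∏ j, ∏ l, y j ^ (u j l * m l) :=
              Finset.prod_congr rfl fun j _ => my_zpow_sum (hy j) _ _
          _ = ∏ l, ∏ j, y j ^ (u j l * m l) := Finset.prod_comm
          _ = ∏ l, (∏ j, y j ^ u j l) ^ m l := by
              refine Finset.prod_congr rfl fun l _ => ?_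
              rw [← Finset.prod_zpow]
              exact Finset.prod_congr rfl fun j _ => by rw [_root_.zpow_mul]

theorem statement1
    (d k : ℕ) (hd : 1 ≤ d) (hk : 1 ≤ k)
    -- the Laurent polynomials `f i` with nonempty support `S i` and nonzero coefficients
    (S : Fin k → Finset (Fin d → ℤ)) (hS : ∀ i, (S i).Nonempty)
    (c : Fin k → (Fin d → ℤ) → ℂ) (hc : ∀ i, ∀ m ∈ S i, c i m ≠ 0)
    -- the columns `u j` of `F` and the vectors `a i` with `a i j = -min_{m ∈ S i} ⟨u j, m⟩`
    (u : Fin (d + k) → Fin d → ℤ)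
    (a : Fin k → Fin (d + k) → ℤ)
    (ha_le : ∀ i j, ∀ m ∈ S i, 0 ≤ (∑ l, u j l * m l) + a i j)
    (ha_min : ∀ i j, ∃ m ∈ S i, (∑ l, u j l * m l) + a i j = 0)
    -- the unimodular matrix `M` whose first `d` rows are `F` and last `k` rows are the `a i`
    (M : Matrix (Fin (d + k)) (Fin (d + k)) ℤ)
    (hMF : ∀ (i : Fin d) (j : Fin (d + k)), M (Fin.castAdd k i) j = u j i)
    (hMA : ∀ (i : Fin k) (j : Fin (d + k)), M (Fin.natAdd d i) j = a i j)
    (hMdet : M.det = 1 ∨ M.det = -1)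
    -- the domain `D = {t ∈ (ℂ*)^d : f i (t) ≠ 0 for all i}`
    (D : Set (Fin d → ℂ))
    (hD : D = {t | (∀ j, t j ≠ 0) ∧ ∀ i, leval (S i) (c i) t ≠ 0})
    -- the graph map `Γ` and the parametrization `φ = φ_{(M⁻¹)ᵗ} ∘ Γ`
    (Γ : (Fin d → ℂ) → Fin (d + k) → ℂ)
    (hΓ : ∀ t, Γ t = Fin.append t (fun i => (leval (S i) (c i) t)⁻¹))
    (φ : (Fin d → ℂ) → Fin (d + k) → ℂ)
    (hφ : ∀ t, φ t = monMap (M⁻¹)ᵀ (Γ t)) :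
    φ '' D =
      {y : Fin (d + k) → ℂ |
        (∀ j, y j ≠ 0) ∧ ∀ i, homogEval (S i) (c i) u (a i) y = 1} := by
  have hdet : IsUnit M.det := by rcases hMdet with h | h <;> simp [h]
  have hMMi : Mᵀ * (M⁻¹)ᵀ = 1 := by
    rw [← Matrix.transpose_mul, Matrix.nonsing_inv_mul M hdet, Matrix.transpose_one]
  have hMiM : (M⁻¹)ᵀ * Mᵀ = 1 := by
    rw [← Matrix.transpose_mul, Matrix.mul_nonsing_inv M hdet, Matrix.transpose_one]
  ext y
  constructor
  · rintro ⟨t, ht, rfl⟩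
    rw [hD] at ht
    obtain ⟨ht0, htf⟩ := ht
    have hΓ0 : ∀ i, Γ t i ≠ 0 := by
      intro i
      rw [hΓ]
      refine Fin.addCases (fun i₀ => ?_) (fun i₀ => ?_) i
      · rw [Fin.append_left]; exact ht0 i₀
      · rw [Fin.append_right]; exact inv_ne_zero (htf i₀)
    have hy0 : ∀ j, φ t j ≠ 0 := by
      intro j; rw [hφ]; exact monMap_ne_zero _ hΓ0 j
    have hback : monMap Mᵀ (φ t) = Γ t := by
      rw [hφ, monMap_monMap _ _ hΓ0, hMiM, monMap_one]
    refine ⟨hy0, fun i => ?_⟩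
    have hteq : (fun l => ∏ j, φ t j ^ u j l) = t := by
      funext l
      have h1 : (monMap Mᵀ (φ t)) (Fin.castAdd k l) = Γ t (Fin.castAdd k l) := by rw [hback]
      simpa [monMap, Matrix.transpose_apply, hMF, hΓ, Fin.append_left] using h1
    have hweq : (∏ j, φ t j ^ a i j) = (leval (S i) (c i) t)⁻¹ := by
      have h1 : (monMap Mᵀ (φ t)) (Fin.natAdd d i) = Γ t (Fin.natAdd d i) := by rw [hback]
      simpa [monMap, Matrix.transpose_apply, hMA, hΓ, Fin.append_right] using h1
    rw [homog_eq _ _ _ _ hy0 (fun m hm j => ha_le i j m hm), hteq, hweq,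
      mul_inv_cancel₀ (htf i)]
  · rintro ⟨hy0, hyh⟩
    set t : Fin d → ℂ := fun l => ∏ j, y j ^ u j l with htdef
    have hw0 : ∀ i : Fin k, (∏ j, y j ^ a i j) ≠ 0 :=
      fun i => Finset.prod_ne_zero_iff.2 fun j _ => zpow_ne_zero _ (hy0 j)
    have hlev : ∀ i, leval (S i) (c i) t = (∏ j, y j ^ a i j)⁻¹ := by
      intro i
      have h1 := hyh i
      rw [homog_eq _ _ _ _ hy0 (fun m hm j => ha_le i j m hm)] at h1
      rw [← htdef] at h1
      exact eq_inv_of_mul_eq_one_left h1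
    have htD : t ∈ D := by
      rw [hD]
      exact ⟨fun l => Finset.prod_ne_zero_iff.2 fun j _ => zpow_ne_zero _ (hy0 j),
        fun i => by rw [hlev i]; exact inv_ne_zero (hw0 i)⟩
    refine ⟨t, htD, ?_⟩
    have hΓt : Γ t = monMap Mᵀ y := by
      funext i
      rw [hΓ]
      refine Fin.addCases (fun l => ?_) (fun i₀ => ?_) i
      · rw [Fin.append_left]
        simp [monMap, Matrix.transpose_apply, hMF, htdef]
      · rw [Fin.append_right, hlev, inv_inv]
        simp [monMap, Matrix.transpose_apply, hMA]
    rw [hφ, hΓt, monMap_monMap _ _ hy0, hMMi, monMap_one]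

end
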